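/- Let S, A, I, R solve the SAIR system with R₀ = -cF⁻¹b = (k₁γμ + k₂λα)/((α+σ)μ), where x = (A,I), F = [[-(α+σ),0],[α,-μ]], b = (1,0)ᵀ, c = (k₁γ, k₂λ). Suppose S(t) → S̄ > 0 and x(t) → 0 as t → ∞, and ∫₀^∞ x(τ)dτ converges. Then log(S(0)/S̄) = -cF⁻¹x(0) + R₀(S(0) - S̄). -/

import Mathlib

open Matrix MeasureTheory Filter Topology

/-- Final size relation for the SAIR model (Theorem 2, first identity). -/
theorem sair_final_size_log
    (k₁ k₂ γ lam α σ μ : ℝ)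
    (hk₁ : 0 < k₁) (hk₂ : 0 < k₂) (hγ : 0 < γ) (hlam : 0 < lam)
    (hα : 0 < α) (hσ : 0 < σ) (hμ : 0 < μ)
    (F : Matrix (Fin 2) (Fin 2) ℝ) (hF : F = !![-(α + σ), 0; α, -μ])
    (b c : Fin 2 → ℝ) (hb : b = ![1, 0]) (hc : c = ![k₁ * γ, k₂ * lam])
    (S : ℝ → ℝ) (x : ℝ → Fin 2 → ℝ)
    (hS0 : 0 < S 0) (hx0 : ∀ i, 0 ≤ x 0 i)
    (hS : ∀ t, HasDerivAt S (-(S t) * (c ⬝ᵥ x t)) t)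
    (hx : ∀ i t, HasDerivAt (fun τ => x τ i)
        ((F *ᵥ x t) i + S t * (c ⬝ᵥ x t) * b i) t)
    (Sbar : ℝ) (hSbar : 0 < Sbar)
    (hSlim : Tendsto S atTop (𝓝 Sbar))
    (hxlim : ∀ i, Tendsto (fun t => x t i) atTop (𝓝 0))
    (hxint : ∀ i, IntegrableOn (fun t => x t i) (Set.Ici 0)) :
    Real.log (S 0 / Sbar) =
      -(c ⬝ᵥ (F⁻¹ *ᵥ x 0)) +
        (k₁ * γ * μ + k₂ * lam * α) / ((α + σ) * μ) * (S 0 - Sbar) := by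
  have hxc : ∀ i, Continuous (fun t => x t i) := fun i =>
    continuous_iff_continuousAt.2 fun t => (hx i t).continuousAt
  have hSc : Continuous S := continuous_iff_continuousAt.2 fun t => (hS t).continuousAt
  have hgc : Continuous (fun t => c ⬝ᵥ x t) := by
    simp only [dotProduct, Fin.sum_univ_two]
    exact (continuous_const.mul (hxc 0)).add (continuous_const.mul (hxc 1))
  set g : ℝ → ℝ := fun t => c ⬝ᵥ x t with hgdef
  set G : ℝ → ℝ := fun T => ∫ t in (0:ℝ)..T, g t with hGdef
  have hGd : ∀ t, HasDerivAt G (g t) t := fun t =>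
    intervalIntegral.integral_hasDerivAt_right (hgc.intervalIntegrable _ _)
      (hgc.stronglyMeasurableAtFilter _ _) hgc.continuousAt
  -- S is everywhere positive
  have hconst : ∀ t, S t * Real.exp (G t) = S 0 := by
    have hdiff : Differentiable ℝ (fun u => S u * Real.exp (G u)) := fun u =>
      ((hS u).mul ((hGd u).exp)).differentiableAt
    have hder0 : ∀ u, deriv (fun u => S u * Real.exp (G u)) u = 0 := by
      intro u
      have h : HasDerivAt (fun u => S u * Real.exp (G u)) 0 u := by
        have := (hS u).mul ((hGd u).exp)
        refine this.congr_deriv ?_; simp only [hgdef]; ring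
      exact h.deriv
    intro t
    have := is_const_of_deriv_eq_zero hdiff hder0 t 0
    simpa [hGdef] using this
  have hSpos : ∀ t, 0 < S t := by
    intro t
    have h := hconst t
    have : S t = S 0 * Real.exp (-G t) := by
      rw [Real.exp_neg]
      field_simp [Real.exp_ne_zero] at h ⊢
      linarith [h]
    rw [this]
    positivity
  -- G T = log (S 0) - log (S T)
  have hGval : ∀ T, G T = Real.log (S 0) - Real.log (S T) := by
    intro T
    have hlogd : ∀ t, HasDerivAt (fun u => -Real.log (S u)) (g t) t := by
      intro t
      have h := ((hS t).log (hSpos t).ne').neg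
      refine h.congr_deriv ?_
      field_simp [(hSpos t).ne']
      simp [hgdef, dotProduct, Fin.sum_univ_two]
    have hint := intervalIntegral.integral_eq_sub_of_hasDerivAt
      (fun t _ => hlogd t) (hgc.intervalIntegrable 0 T)
    show (∫ t in (0:ℝ)..T, g t) = _
    rw [hint]; ring
  -- limits of interval integrals of x components
  set Y : Fin 2 → ℝ := fun i => ∫ t in Set.Ioi (0:ℝ), x t i with hYdef
  have hYlim : ∀ i, Tendsto (fun T => ∫ t in (0:ℝ)..T, x t i) atTop (𝓝 (Y i)) := by
    intro i
    exact MeasureTheory.intervalIntegral_tendsto_integral_Ioi 0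
      ((hxint i).mono_set Set.Ioi_subset_Ici_self) tendsto_id
  -- ∫₀^T S·g = S 0 - S T
  have hSg : ∀ T, (∫ t in (0:ℝ)..T, S t * g t) = S 0 - S T := by
    intro T
    have hd : ∀ t, HasDerivAt (fun u => -S u) (S t * g t) t := by
      intro t
      have := (hS t).neg
      refine this.congr_deriv ?_; simp only [hgdef]; ring
    have := intervalIntegral.integral_eq_sub_of_hasDerivAt (fun t _ => hd t)
      (((hSc.mul hgc)).intervalIntegrable 0 T)
    rw [this]; ring
  -- main integrated equation for each component
  have hEq : ∀ i, -(x 0 i) = F i 0 * Y 0 + F i 1 * Y 1 + b i * (S 0 - Sbar) := by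
    intro i
    have hfeq : ∀ T, x T i - x 0 i =
        F i 0 * (∫ t in (0:ℝ)..T, x t 0) + F i 1 * (∫ t in (0:ℝ)..T, x t 1)
          + b i * (S 0 - S T) := by
      intro T
      have hint := intervalIntegral.integral_eq_sub_of_hasDerivAt
        (a := 0) (b := T)
        (f := fun τ => x τ i)
        (f' := fun t => (F *ᵥ x t) i + S t * (c ⬝ᵥ x t) * b i)
        (fun t _ => hx i t)
        (by
          apply Continuous.intervalIntegrable
          have : Continuous fun t => (F *ᵥ x t) i := by
            simp only [Matrix.mulVec, dotProduct, Fin.sum_univ_two]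
            exact (continuous_const.mul (hxc 0)).add (continuous_const.mul (hxc 1))
          exact this.add ((hSc.mul hgc).mul continuous_const))
      rw [← hint]
      have : ∀ t, (F *ᵥ x t) i + S t * (c ⬝ᵥ x t) * b i
          = F i 0 * x t 0 + F i 1 * x t 1 + b i * (S t * g t) := by
        intro t
        simp only [Matrix.mulVec, dotProduct, Fin.sum_univ_two, hgdef]
        ring
      rw [intervalIntegral.integral_congr (fun t _ => this t)]
      rw [intervalIntegral.integral_add, intervalIntegral.integral_add,
        intervalIntegral.integral_const_mul, intervalIntegral.integral_const_mul,
        intervalIntegral.integral_const_mul, hSg]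
      · exact (continuous_const.mul (hxc 0)).intervalIntegrable 0 T
      · exact (continuous_const.mul (hxc 1)).intervalIntegrable 0 T
      · exact ((continuous_const.mul (hxc 0)).add
          (continuous_const.mul (hxc 1))).intervalIntegrable 0 T
      · exact (continuous_const.mul (hSc.mul hgc)).intervalIntegrable 0 T
    have hL : Tendsto (fun T => x T i - x 0 i) atTop (𝓝 (-(x 0 i))) := by
      simpa using (hxlim i).sub_const (x 0 i)
    have hR : Tendsto (fun T => F i 0 * (∫ t in (0:ℝ)..T, x t 0)
        + F i 1 * (∫ t in (0:ℝ)..T, x t 1) + b i * (S 0 - S T)) atTop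
        (𝓝 (F i 0 * Y 0 + F i 1 * Y 1 + b i * (S 0 - Sbar))) := by
      exact (((hYlim 0).const_mul _).add ((hYlim 1).const_mul _)).add
        ((tendsto_const_nhds.sub hSlim).const_mul _)
    have : Tendsto (fun T => x T i - x 0 i) atTop
        (𝓝 (F i 0 * Y 0 + F i 1 * Y 1 + b i * (S 0 - Sbar))) := by
      simpa only [hfeq] using hR
    exact tendsto_nhds_unique hL this
  -- log equation
  have hlogEq : Real.log (S 0) - Real.log Sbar = c 0 * Y 0 + c 1 * Y 1 := by
    have hGform : ∀ T, G T = c 0 * (∫ t in (0:ℝ)..T, x t 0)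
        + c 1 * (∫ t in (0:ℝ)..T, x t 1) := by
      intro T
      rw [hGdef]
      simp only
      have : ∀ t, g t = c 0 * x t 0 + c 1 * x t 1 := by
        intro t; simp [hgdef, dotProduct, Fin.sum_univ_two]
      rw [intervalIntegral.integral_congr (fun t _ => this t),
        intervalIntegral.integral_add, intervalIntegral.integral_const_mul,
        intervalIntegral.integral_const_mul]
      · exact (continuous_const.mul (hxc 0)).intervalIntegrable 0 T
      · exact (continuous_const.mul (hxc 1)).intervalIntegrable 0 T
    have hL : Tendsto G atTop (𝓝 (Real.log (S 0) - Real.log Sbar)) := by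
      have hlog : Tendsto (fun T => Real.log (S T)) atTop (𝓝 (Real.log Sbar)) :=
        ((Real.continuousAt_log hSbar.ne').tendsto).comp hSlim
      have : Tendsto (fun T => Real.log (S 0) - Real.log (S T)) atTop
          (𝓝 (Real.log (S 0) - Real.log Sbar)) := tendsto_const_nhds.sub hlog
      simpa only [← hGval] using this
    have hR : Tendsto G atTop (𝓝 (c 0 * Y 0 + c 1 * Y 1)) := by
      have := ((hYlim 0).const_mul (c 0)).add ((hYlim 1).const_mul (c 1))
      simpa only [← hGform] using this
    exact tendsto_nhds_unique hL hR
  -- compute F⁻¹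
  have hdet : (α + σ) * μ ≠ 0 := by positivity
  have hασ : α + σ ≠ 0 := by positivity
  have hFinv : F⁻¹ = !![-(α + σ)⁻¹, 0; -(α / ((α + σ) * μ)), -μ⁻¹] := by
    apply Matrix.inv_eq_right_inv
    rw [hF]
    ext i j
    fin_cases i <;> fin_cases j <;>
      simp [Matrix.mul_apply, Fin.sum_univ_two] <;> field_simp <;> ring
  -- extract scalar equations
  have hE0 := hEq 0
  have hE1 := hEq 1
  rw [hF, hb] at hE0 hE1
  simp only [Matrix.of_apply, Matrix.cons_val', Matrix.cons_val_zero, Matrix.cons_val_one, Matrix.head_cons,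
    Matrix.empty_val', Matrix.cons_val_fin_one, Matrix.head_fin_const] at hE0 hE1
  rw [hc] at hlogEq
  simp only [Matrix.cons_val_zero, Matrix.cons_val_one, Matrix.head_cons] at hlogEq
  -- final computation
  rw [Real.log_div hS0.ne' hSbar.ne', hFinv, hc]
  simp only [Matrix.mulVec, dotProduct, Fin.sum_univ_two, Matrix.of_apply, Matrix.cons_val', Matrix.cons_val_zero,
    Matrix.cons_val_one, Matrix.head_cons, Matrix.empty_val', Matrix.cons_val_fin_one,
    Matrix.head_fin_const]
  have hY0 : Y 0 = (x 0 0 + (S 0 - Sbar)) / (α + σ) := by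
    field_simp
    linarith [hE0]
  have hY1 : Y 1 = (x 0 1 + α * Y 0) / μ := by
    field_simp
    linarith [hE1]
  rw [hlogEq, hY1, hY0]
  field_simp
  ring
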